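/- For s, t ∈ ℝ let T_s, U_t : ℝ³ → ℝ³ be the affine bijections T_s(x₁, x₂, x₃) = (e^s x₁, e^{2s} x₂, e^{3s} x₃) and U_t(x₁, x₂, x₃) = (x₁ + t, x₂ + 2t x₁ + t², x₃ + 3t x₂ + 3t² x₁ + t³), and let Σ be the subgroup of the group of affine automorphisms of ℝ³ generated by {T_s : s ∈ ℝ} ∪ {U_t : t ∈ ℝ}. Then the orbit of the point (1, 0, 0) under Σ equals the set {(t, t², t³) + r·(1, 2t, 3t²) : t ∈ ℝ, r > 0}. -/
import Mathlib


/-- Let `T s` and `U t` be the affine automorphisms of `ℝ³` given by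
`T s (x₁,x₂,x₃) = (eˢx₁, e²ˢx₂, e³ˢx₃)` and
`U t (x₁,x₂,x₃) = (x₁+t, x₂+2tx₁+t², x₃+3tx₂+3t²x₁+t³)`, and let `G` be the subgroup of
the group of affine automorphisms of `ℝ³` generated by all `T s` and `U t`.  The orbit of
`(1,0,0)` under `G` is `{c(t) + r·c'(t) : t ∈ ℝ, r > 0}` where `c(t) = (t,t²,t³)` is the
twisted cubic. -/
theorem orbit_eq_tangent_halflines_of_twisted_cubic
    (T U : ℝ → ((Fin 3 → ℝ) ≃ᵃ[ℝ] (Fin 3 → ℝ)))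
    (hT : ∀ (s : ℝ) (x : Fin 3 → ℝ),
      T s x = ![Real.exp s * x 0, Real.exp (2 * s) * x 1, Real.exp (3 * s) * x 2])
    (hU : ∀ (t : ℝ) (x : Fin 3 → ℝ),
      U t x = ![x 0 + t, x 1 + 2 * t * x 0 + t ^ 2,
        x 2 + 3 * t * x 1 + 3 * t ^ 2 * x 0 + t ^ 3])
    (G : Subgroup ((Fin 3 → ℝ) ≃ᵃ[ℝ] (Fin 3 → ℝ)))
    (hG : G = Subgroup.closure (Set.range T ∪ Set.range U)) :
    {y : Fin 3 → ℝ | ∃ g ∈ G, g ![1, 0, 0] = y} =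
      {y : Fin 3 → ℝ | ∃ t r : ℝ, 0 < r ∧
        y = ![t + r * 1, t ^ 2 + r * (2 * t), t ^ 3 + r * (3 * t ^ 2)]} := by
  subst hG
  set S : Set (Fin 3 → ℝ) := {y : Fin 3 → ℝ | ∃ t r : ℝ, 0 < r ∧
        y = ![t + r * 1, t ^ 2 + r * (2 * t), t ^ 3 + r * (3 * t ^ 2)]} with hS
  have e2 : ∀ s : ℝ, Real.exp (2 * s) = Real.exp s * Real.exp s := fun s => by
    rw [show (2:ℝ) * s = s + s by ring, Real.exp_add]
  have e3 : ∀ s : ℝ, Real.exp (3 * s) = Real.exp s * (Real.exp s * Real.exp s) := fun s => by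
    rw [show (3:ℝ) * s = s + (s + s) by ring, Real.exp_add, Real.exp_add]
  have hTS : ∀ s x, x ∈ S → T s x ∈ S := by
    rintro s x ⟨t, r, hr, rfl⟩
    refine ⟨Real.exp s * t, Real.exp s * r, by positivity, ?_⟩
    rw [hT]
    funext i
    fin_cases i <;> simp [e2, e3] <;> ring
  have hUS : ∀ u x, x ∈ S → U u x ∈ S := by
    rintro u x ⟨t, r, hr, rfl⟩
    refine ⟨t + u, r, hr, ?_⟩
    rw [hU]; funext i; fin_cases i <;> simp <;> ring
  have hTinv : ∀ s x, T s (T (-s) x) = x := by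
    intro s x
    rw [hT, hT]; funext i
    fin_cases i <;> simp <;>
      rw [← mul_assoc, ← Real.exp_add] <;> ring_nf <;> simp
  have hUinv : ∀ u x, U u (U (-u) x) = x := by
    intro u x
    rw [hU, hU]; funext i
    fin_cases i <;> simp <;> ring
  have base : (![1, 0, 0] : Fin 3 → ℝ) ∈ S := by
    refine ⟨0, 1, one_pos, ?_⟩
    funext i; fin_cases i <;> norm_num
  ext y
  constructor
  · rintro ⟨g, hg, rfl⟩
    have key : ∀ x ∈ S, g x ∈ S := by
      have : (∀ x ∈ S, g x ∈ S) ∧ (∀ x ∈ S, g⁻¹ x ∈ S) := by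
        refine Subgroup.closure_induction
          (p := fun g _ => (∀ x ∈ S, g x ∈ S) ∧ (∀ x ∈ S, g⁻¹ x ∈ S)) ?_ ?_ ?_ ?_ hg
        · rintro g (⟨s, rfl⟩ | ⟨u, rfl⟩)
          · refine ⟨hTS s, fun x hx => ?_⟩
            have h1 : T s ((T s)⁻¹ x) = x := by
              have := congrFun (AffineEquiv.coe_mul (T s) (T s)⁻¹) x
              simpa using this.symm.trans (by rw [mul_inv_cancel]; simp)
            have h2 : T s (T (-s) x) = x := hTinv s x
            have : (T s)⁻¹ x = T (-s) x := (T s).injective (h1.trans h2.symm)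
            rw [this]; exact hTS (-s) x hx
          · refine ⟨hUS u, fun x hx => ?_⟩
            have h1 : U u ((U u)⁻¹ x) = x := by
              have := congrFun (AffineEquiv.coe_mul (U u) (U u)⁻¹) x
              simpa using this.symm.trans (by rw [mul_inv_cancel]; simp)
            have h2 : U u (U (-u) x) = x := hUinv u x
            have : (U u)⁻¹ x = U (-u) x := (U u).injective (h1.trans h2.symm)
            rw [this]; exact hUS (-u) x hx
        · simp
        · rintro a b _ _ ⟨ha, ha'⟩ ⟨hb, hb'⟩
          constructor
          · intro x hx
            have : (a * b) x = a (b x) := congrFun (AffineEquiv.coe_mul a b) x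
            rw [this]; exact ha _ (hb _ hx)
          · intro x hx
            have : (a * b)⁻¹ x = b⁻¹ (a⁻¹ x) := by
              rw [mul_inv_rev]; exact congrFun (AffineEquiv.coe_mul b⁻¹ a⁻¹) x
            rw [this]; exact hb' _ (ha' _ hx)
        · rintro a _ ⟨ha, ha'⟩
          exact ⟨ha', by simpa using ha⟩
      exact this.1
    exact key _ base
  · rintro ⟨t, r, hr, rfl⟩
    refine ⟨U t * T (Real.log r), ?_, ?_⟩
    · exact mul_mem (Subgroup.subset_closure (Or.inr ⟨t, rfl⟩))
        (Subgroup.subset_closure (Or.inl ⟨Real.log r, rfl⟩))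
    · have : (U t * T (Real.log r)) ![1,0,0] = U t (T (Real.log r) ![1,0,0]) :=
        congrFun (AffineEquiv.coe_mul _ _) _
      rw [this, hT, hU]
      funext i
      fin_cases i <;> simp [Real.exp_log hr, e2, e3] <;> ring
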